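/- Compatibility of the cut transform with iteration: let S be a finite type and e : S → S → ℕ∞ take values only in {0, 1, ω, ⊤} (with ω := 2), and assume e = e ⋄ e. Then M(e♯) = (M(e))♯, where e♯ : S → S → ℕ∞ is defined by e♯ s t = ω if e s t = 1 and (s,t) is not stable in e, and e♯ s t = e s t otherwise; and for E = M(e), E♯ : Set S → Set S → ℕ∞ is defined by E♯(A,B) = ω if E(A,B) = 1 and there is no R ⊆ S with E(R,R) = 0, E(A,R) ≤ 1 and E(R,B) ≤ 1, and E♯(A,B) = E(A,B) otherwise. -/

import Mathlib

/-- The cut transform of a flow matrix `f : S → S → ℕ∞`: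
`M(f)(A,B) = sup {f s t | s ∈ A, t ∉ B}`. -/
noncomputable def cutTransform {S : Type*} (f : S → S → ℕ∞) (A B : Set S) : ℕ∞ :=
  ⨆ s ∈ A, ⨆ t ∈ Bᶜ, f s t

/-- The bottleneck product of two flow matrices:
`(f₁ ⋄ f₂) s t = sup_{r ∈ S} min (f₁ s r) (f₂ r t)`. -/
noncomputable def bottleneckProd {S : Type*} (f₁ f₂ : S → S → ℕ∞) (s t : S) : ℕ∞ :=
  ⨆ r : S, min (f₁ s r) (f₂ r t)

/-- An edge `(s,t)` is stable in `e` if there are no `s₀, t₀` with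
`e s s₀ ≥ ω`, `e s₀ t₀ = 1` and `e t₀ t ≥ ω` (where `ω = 2`). -/
def Stable {S : Type*} (e : S → S → ℕ∞) (s t : S) : Prop :=
  ¬ ∃ s₀ t₀ : S, 2 ≤ e s s₀ ∧ e s₀ t₀ = 1 ∧ 2 ≤ e t₀ t

open Classical in
/-- The iteration `e♯` of a flow matrix: unstable `1`-edges are raised to `ω = 2`. -/
noncomputable def sharpFlow {S : Type*} (e : S → S → ℕ∞) (s t : S) : ℕ∞ :=
  if e s t = 1 ∧ ¬ Stable e s t then 2 else e s t

open Classical in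
/-- The iteration `E♯` of a cut matrix: unstable `1`-coordinates are raised to `ω = 2`. -/
noncomputable def sharpCut {S : Type*} (E : Set S → Set S → ℕ∞) (A B : Set S) : ℕ∞ :=
  if E A B = 1 ∧ ¬ ∃ R : Set S, E R R = 0 ∧ E A R ≤ 1 ∧ E R B ≤ 1 then 2
  else E A B

section CutSharpAux

variable {S : Type*}

private lemma two_le_of_one_lt' {x : ℕ∞} (h : 1 < x) : 2 ≤ x := Order.add_one_le_of_lt h

private lemma one_le_of_not_le_zero' {x : ℕ∞} (h : ¬ x ≤ 0) : 1 ≤ x :=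
  ENat.one_le_iff_ne_zero.mpr (by simpa using h)

private lemma le_cutTransform' (e : S → S → ℕ∞) {A B : Set S} {s t : S}
    (hs : s ∈ A) (ht : t ∉ B) : e s t ≤ cutTransform e A B :=
  le_trans (le_iSup₂ (f := fun t (_ : t ∈ Bᶜ) => e s t) t ht)
    (le_iSup₂ (f := fun s (_ : s ∈ A) => ⨆ t ∈ Bᶜ, e s t) s hs)

private lemma cutTransform_le_iff' (e : S → S → ℕ∞) {A B : Set S} {c : ℕ∞} :
    cutTransform e A B ≤ c ↔ ∀ s ∈ A, ∀ t ∉ B, e s t ≤ c := by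
  simp [cutTransform]

private lemma tri' (e : S → S → ℕ∞) (hidem : e = fun s t => bottleneckProd e e s t)
    (s r t : S) : min (e s r) (e r t) ≤ e s t := by
  conv_rhs => rw [hidem]
  exact le_iSup (fun r => min (e s r) (e r t)) r

end CutSharpAux

/-- Compatibility of the cut transform with iteration: `M(e♯) = (M(e))♯` for
idempotent `e` with values in `{0, 1, ω, ⊤}` (`ω = 2`). -/
theorem cutTransform_sharp {S : Type*} [Fintype S] (e : S → S → ℕ∞)
    (hval : ∀ s t : S, e s t = 0 ∨ e s t = 1 ∨ e s t = 2 ∨ e s t = ⊤)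
    (hidem : e = fun s t => bottleneckProd e e s t) (A B : Set S) :
    cutTransform (sharpFlow e) A B = sharpCut (cutTransform e) A B := by
  classical
  set E := cutTransform e with hE
  have htri : ∀ s r t : S, min (e s r) (e r t) ≤ e s t := tri' e hidem
  by_cases h1 : E A B = 1
  · have hub : ∀ s ∈ A, ∀ t ∉ B, e s t ≤ 1 := fun s hs t ht =>
      h1 ▸ le_cutTransform' e hs ht
    by_cases hun : ∃ s ∈ A, ∃ t ∉ B, e s t = 1 ∧ ¬ Stable e s t
    · obtain ⟨s, hs, t, ht, het, hst⟩ := hun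
      have hnoR : ¬ ∃ R : Set S, E R R = 0 ∧ E A R ≤ 1 ∧ E R B ≤ 1 := by
        rintro ⟨R, hRR, hAR, hRB⟩
        obtain ⟨s₀, t₀, h1s, h2s, h3s⟩ := not_not.mp hst
        have hs₀ : s₀ ∈ R := by
          by_contra h
          have h2 := le_trans (le_cutTransform' e hs h) hAR
          exact absurd (le_trans h1s h2) (by norm_num)
        have ht₀ : t₀ ∉ R := by
          intro h
          have h2 := le_trans (le_cutTransform' e h ht) hRB
          exact absurd (le_trans h3s h2) (by norm_num)
        have h2 := le_cutTransform' e hs₀ ht₀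
        rw [← hE, hRR] at h2
        simp [h2s] at h2
      rw [sharpCut, if_pos ⟨h1, hnoR⟩]
      apply le_antisymm
      · rw [cutTransform_le_iff']
        intro s' hs' t' ht'
        rw [sharpFlow]
        split
        · exact le_refl _
        · exact le_trans (hub s' hs' t' ht') one_le_two
      · have h2 : sharpFlow e s t = 2 := by rw [sharpFlow, if_pos ⟨het, hst⟩]
        exact h2 ▸ le_cutTransform' (sharpFlow e) hs ht
    · push_neg at hun
      have eqpt : ∀ s ∈ A, ∀ t ∉ B, sharpFlow e s t = e s t := by
        intro s hs t ht
        rw [sharpFlow, if_neg]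
        rintro ⟨h1', hns⟩
        exact hns (hun s hs t ht h1')
      have heq : cutTransform (sharpFlow e) A B = E A B := by
        apply le_antisymm
        · rw [cutTransform_le_iff']
          intro s hs t ht
          rw [eqpt s hs t ht]
          exact le_cutTransform' e hs ht
        · rw [hE, cutTransform_le_iff']
          intro s hs t ht
          rw [← eqpt s hs t ht]
          exact le_cutTransform' (sharpFlow e) hs ht
      set R : Set S := {r' | ∃ s ∈ A, ∃ r, 2 ≤ e s r ∧ (r = r' ∨ 1 ≤ e r r')} with hRdef
      have hRR : E R R = 0 := by
        apply le_antisymm _ zero_le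
        rw [hE, cutTransform_le_iff']
        intro r' hr' r'' hr''
        by_contra hne
        have h1le : 1 ≤ e r' r'' := one_le_of_not_le_zero' hne
        obtain ⟨s, hs, r, h2r, hor⟩ := hr'
        refine hr'' ⟨s, hs, r, h2r, Or.inr ?_⟩
        rcases hor with rfl | h1r
        · exact h1le
        · exact le_trans (le_min h1r h1le) (htri r r' r'')
      have hAR : E A R ≤ 1 := by
        rw [hE, cutTransform_le_iff']
        intro s' hs' r' hr'
        by_contra hne
        exact hr' ⟨s', hs', r', two_le_of_one_lt' (not_le.mp hne), Or.inl rfl⟩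
      have hRB : E R B ≤ 1 := by
        rw [hE, cutTransform_le_iff']
        intro r' hr' b hb
        by_contra hne
        have h2b : 2 ≤ e r' b := two_le_of_one_lt' (not_le.mp hne)
        obtain ⟨s, hs, r, h2r, hor⟩ := hr'
        rcases hor with rfl | h1r
        · exact absurd (le_trans (le_trans (le_min h2r h2b) (htri s r b)) (hub s hs b hb))
            (by norm_num)
        · rcases hval r r' with h0 | hone | h2' | htop
          · rw [h0] at h1r; exact absurd h1r (by norm_num)
          · have hsb : e s b = 1 := by
              apply le_antisymm (hub s hs b hb)
              have hsr' : 1 ≤ e s r' :=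
                le_trans (le_min (le_trans one_le_two h2r) h1r) (htri s r r')
              exact le_trans (le_min hsr' (le_trans one_le_two h2b)) (htri s r' b)
            exact (hun s hs b hb hsb) ⟨r, r', h2r, hone, h2b⟩
          · have hrb : 2 ≤ e r b := le_trans (le_min (le_of_eq h2'.symm) h2b) (htri r r' b)
            exact absurd (le_trans (le_trans (le_min h2r hrb) (htri s r b)) (hub s hs b hb))
              (by norm_num)
          · have hrb : 2 ≤ e r b :=
              le_trans (le_min (htop ▸ le_top) h2b) (htri r r' b)
            exact absurd (le_trans (le_trans (le_min h2r hrb) (htri s r b)) (hub s hs b hb))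
              (by norm_num)
      rw [sharpCut, if_neg]
      · exact heq
      · rintro ⟨_, hno⟩
        exact hno ⟨R, hRR, hAR, hRB⟩
  · rw [sharpCut, if_neg (fun h => h1 h.1)]
    apply le_antisymm
    · rw [cutTransform_le_iff']
      intro s hs t ht
      rw [sharpFlow]
      split
      · rename_i h
        have h1le : 1 ≤ E A B := h.1 ▸ le_cutTransform' e hs ht
        exact two_le_of_one_lt' (lt_of_le_of_ne h1le (Ne.symm h1))
      · exact le_cutTransform' e hs ht
    · rw [hE, cutTransform_le_iff']
      intro s hs t ht
      refine le_trans ?_ (le_cutTransform' (sharpFlow e) hs ht)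
      rw [sharpFlow]
      split
      · rename_i h
        rw [h.1]; exact one_le_two
      · exact le_refl _
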